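/- For any integer-valued random variable Y with mean μ and finite variance σ² > 0, the values P(Y* = j−1) := E[(Y−μ)1(Y ≥ j)]/σ², j ∈ ℤ, are nonnegative and sum to 1, hence define a probability distribution on ℤ (the discrete Y-zero biased distribution). -/

import Mathlib

open MeasureTheory
open scoped ENNReal NNReal

/-- Auxiliary: sum over `ℤ` of a function supported on `[1, n] ∪ [n+1, 0]`. -/
lemma zb_aux (n : ℤ) (a b : ℝ) :
    HasSum (fun j : ℤ => if 1 ≤ j then (if j ≤ n then a else 0) else (if n < j then b else 0))
      (a * n.toNat + b * (-n).toNat) := by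
  classical
  set f : ℤ → ℝ := fun j => if 1 ≤ j then (if j ≤ n then a else 0) else (if n < j then b else 0)
    with hf
  have hz : ∀ j : ℤ, j ∉ (Finset.Icc 1 n ∪ Finset.Icc (n + 1) 0) → f j = 0 := by
    intro j hj
    simp only [Finset.mem_union, Finset.mem_Icc, not_or, not_and_or, not_le] at hj
    simp only [hf]
    split_ifs with h1 h2 h3
    · exact ((by omega : False)).elim
    · rfl
    · exact ((by omega : False)).elim
    · rfl
  have hdisj : Disjoint (Finset.Icc 1 n) (Finset.Icc (n + 1) 0) := by
    rw [Finset.disjoint_left]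
    intro j h1 h2
    simp only [Finset.mem_Icc] at h1 h2
    omega
  have h1 : ∑ j ∈ Finset.Icc 1 n, f j = a * n.toNat := by
    rw [Finset.sum_congr rfl (fun j hj => ?_), Finset.sum_const, Int.card_Icc]
    · have : (n + 1 - 1 : ℤ) = n := by ring
      rw [this, nsmul_eq_mul, mul_comm]
    · simp only [Finset.mem_Icc] at hj
      simp only [hf, if_pos hj.1, if_pos hj.2]
  have h2 : ∑ j ∈ Finset.Icc (n + 1) 0, f j = b * (-n).toNat := by
    rw [Finset.sum_congr rfl (fun j hj => ?_), Finset.sum_const, Int.card_Icc]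
    · have : (0 + 1 - (n + 1) : ℤ) = -n := by ring
      rw [this, nsmul_eq_mul, mul_comm]
    · simp only [Finset.mem_Icc] at hj
      have hnle : ¬ (1 ≤ j) := by omega
      have hlt : n < j := by omega
      simp only [hf, if_neg hnle, if_pos hlt]
  have : HasSum f _ := hasSum_sum_of_ne_finset_zero hz
  rwa [Finset.sum_union hdisj, h1, h2] at this

/-- The values `P(Y* = j-1) = E[(Y-μ)1(Y ≥ j)]/σ²` are nonnegative and sum to one,
hence define a probability distribution on ℤ (the discrete zero biased distribution). -/
theorem discrete_zero_bias_exists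
    {Ω : Type*} [MeasurableSpace Ω] (P : Measure Ω) [IsProbabilityMeasure P]
    (Y : Ω → ℤ) (hY : Measurable Y)
    (μ σ2 : ℝ) (hσ : 0 < σ2)
    (hint : Integrable (fun ω => ((Y ω : ℝ)) ^ 2) P)
    (hmean : ∫ ω, (Y ω : ℝ) ∂P = μ)
    (hvar : ∫ ω, ((Y ω : ℝ) - μ) ^ 2 ∂P = σ2) :
    (∀ j : ℤ, 0 ≤ (∫ ω in {ω | j ≤ Y ω}, ((Y ω : ℝ) - μ) ∂P) / σ2) ∧
    HasSum (fun j : ℤ => (∫ ω in {ω | j ≤ Y ω}, ((Y ω : ℝ) - μ) ∂P) / σ2) 1 := by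
  classical
  have hYm : Measurable fun ω => (Y ω : ℝ) := measurable_from_top.comp hY
  have hcm : Measurable fun ω => (Y ω : ℝ) - μ := hYm.sub measurable_const
  -- Integrability facts
  have hYint : Integrable (fun ω => (Y ω : ℝ)) P := by
    have hadd : Integrable (fun ω => (Y ω : ℝ) ^ 2 + 1) P := hint.add (integrable_const 1)
    refine hadd.mono hYm.aestronglyMeasurable (Filter.Eventually.of_forall fun ω => ?_)
    have h1 : (0:ℝ) ≤ (Y ω : ℝ) ^ 2 + 1 := by positivity
    rw [Real.norm_eq_abs, Real.norm_eq_abs, abs_of_nonneg h1]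
    nlinarith [sq_abs ((Y ω : ℝ)), sq_nonneg (|(Y ω : ℝ)| - 1)]
  have hc_int : Integrable (fun ω => (Y ω : ℝ) - μ) P := hYint.sub (integrable_const μ)
  have hc_mean : ∫ ω, ((Y ω : ℝ) - μ) ∂P = 0 := by
    rw [integral_sub hYint (integrable_const μ), hmean, integral_const]
    simp
  have hsq_int : Integrable (fun ω => ((Y ω : ℝ) - μ) ^ 2) P := by
    have heq : (fun ω => ((Y ω : ℝ) - μ) ^ 2)
        = fun ω => (Y ω : ℝ) ^ 2 - (2 * μ) * (Y ω : ℝ) + μ ^ 2 := by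
      funext ω; ring
    rw [heq]
    exact (hint.sub (hYint.const_mul (2 * μ))).add (integrable_const _)
  have hprod_int : Integrable (fun ω => ((Y ω : ℝ) - μ) * (Y ω : ℝ)) P := by
    have heq : (fun ω => ((Y ω : ℝ) - μ) * (Y ω : ℝ))
        = fun ω => (Y ω : ℝ) ^ 2 - μ * (Y ω : ℝ) := by
      funext ω; ring
    rw [heq]
    exact hint.sub (hYint.const_mul μ)
  have hprod : ∫ ω, ((Y ω : ℝ) - μ) * (Y ω : ℝ) ∂P = σ2 := by
    have heq : (fun ω => ((Y ω : ℝ) - μ) * (Y ω : ℝ))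
        = fun ω => ((Y ω : ℝ) - μ) ^ 2 + μ * ((Y ω : ℝ) - μ) := by
      funext ω; ring
    rw [heq, integral_add hsq_int (hc_int.const_mul μ), hvar, integral_const_mul, hc_mean]
    ring
  have hmeasGe : ∀ j : ℤ, MeasurableSet {ω | j ≤ Y ω} := fun j => hY measurableSet_Ici
  have hmeasLt : ∀ j : ℤ, MeasurableSet {ω | Y ω < j} := fun j => hY measurableSet_Iio
  -- Nonnegativity
  have hnonneg : ∀ j : ℤ, 0 ≤ ∫ ω in {ω | j ≤ Y ω}, ((Y ω : ℝ) - μ) ∂P := by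
    intro j
    rcases le_or_gt μ (j : ℝ) with hj | hj
    · refine setIntegral_nonneg (hmeasGe j) fun ω hω => ?_
      have : (j : ℝ) ≤ (Y ω : ℝ) := by exact_mod_cast hω
      linarith
    · -- complement trick
      have hcompl : {ω | Y ω < j} = {ω | j ≤ Y ω}ᶜ := by
        ext ω; simp [not_le]
      have hsplit := integral_add_compl (hmeasGe j) hc_int
      rw [hc_mean] at hsplit
      have hle : ∫ ω in {ω | j ≤ Y ω}ᶜ, ((Y ω : ℝ) - μ) ∂P ≤ 0 := by
        rw [← hcompl]
        refine setIntegral_nonpos (hmeasLt j) fun ω hω => ?_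
        have : (Y ω : ℝ) < (j : ℝ) := by exact_mod_cast hω
        linarith
      linarith
  refine ⟨fun j => div_nonneg (hnonneg j) hσ.le, ?_⟩
  -- The family of functions
  set F : ℤ → Ω → ℝ := fun j ω =>
    if 1 ≤ j then Set.indicator {ω | j ≤ Y ω} (fun ω => (Y ω : ℝ) - μ) ω
    else - Set.indicator {ω | Y ω < j} (fun ω => (Y ω : ℝ) - μ) ω with hF
  have hF_int : ∀ j : ℤ, Integrable (F j) P := by
    intro j
    by_cases h : 1 ≤ j
    · simpa only [hF, if_pos h] using hc_int.indicator (hmeasGe j)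
    · simpa only [hF, if_neg h, Pi.neg_def] using (hc_int.indicator (hmeasLt j)).neg
  have hF_integral : ∀ j : ℤ,
      ∫ ω, F j ω ∂P = ∫ ω in {ω | j ≤ Y ω}, ((Y ω : ℝ) - μ) ∂P := by
    intro j
    by_cases h : 1 ≤ j
    · simp only [hF, if_pos h]
      rw [integral_indicator (hmeasGe j)]
    · simp only [hF, if_neg h]
      rw [integral_neg, integral_indicator (hmeasLt j)]
      have hcompl : {ω | Y ω < j} = {ω | j ≤ Y ω}ᶜ := by
        ext ω; simp [not_le]
      have hsplit := integral_add_compl (hmeasGe j) hc_int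
      rw [hc_mean] at hsplit
      rw [hcompl]
      linarith
  -- Pointwise description of F j ω
  have hFval : ∀ j : ℤ, ∀ ω,
      F j ω = if 1 ≤ j then (if j ≤ Y ω then ((Y ω : ℝ) - μ) else 0)
        else (if Y ω < j then -((Y ω : ℝ) - μ) else 0) := by
    intro j ω
    by_cases h : 1 ≤ j
    · simp only [hF, if_pos h, Set.indicator_apply, Set.mem_setOf_eq]
    · simp only [hF, if_neg h, Set.indicator_apply, Set.mem_setOf_eq]
      by_cases h2 : Y ω < j
      · rw [if_pos h2, if_pos h2]
      · rw [if_neg h2, if_neg h2, neg_zero]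
  -- Pointwise HasSum
  have hpt : ∀ ω, HasSum (fun j : ℤ => F j ω) (((Y ω : ℝ) - μ) * (Y ω : ℝ)) := by
    intro ω
    have h := zb_aux (Y ω) ((Y ω : ℝ) - μ) (-((Y ω : ℝ) - μ))
    have hval : ((Y ω : ℝ) - μ) * ((Y ω).toNat : ℝ)
        + (-((Y ω : ℝ) - μ)) * (((-(Y ω)).toNat : ℝ)) = ((Y ω : ℝ) - μ) * (Y ω : ℝ) := by
      have hn : (((Y ω).toNat : ℤ) - (((-(Y ω)).toNat : ℤ))) = Y ω := by omega
      have hn' : (((Y ω).toNat : ℝ) - (((-(Y ω)).toNat : ℝ))) = (Y ω : ℝ) := by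
        exact_mod_cast hn
      linear_combination ((Y ω : ℝ) - μ) * hn'
    rw [hval] at h
    refine h.congr_fun fun j => ?_
    rw [hFval j ω]
  -- Pointwise HasSum of norms
  have hptn : ∀ ω, HasSum (fun j : ℤ => ‖F j ω‖) (|(Y ω : ℝ) - μ| * |(Y ω : ℝ)|) := by
    intro ω
    have h := zb_aux (Y ω) (|(Y ω : ℝ) - μ|) (|(Y ω : ℝ) - μ|)
    have hval : |(Y ω : ℝ) - μ| * ((Y ω).toNat : ℝ)
        + |(Y ω : ℝ) - μ| * (((-(Y ω)).toNat : ℝ)) = |(Y ω : ℝ) - μ| * |(Y ω : ℝ)| := by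
      have hn : (((Y ω).toNat : ℤ) + (((-(Y ω)).toNat : ℤ))) = ((Y ω).natAbs : ℤ) := by omega
      have hn' : (((Y ω).toNat : ℝ) + (((-(Y ω)).toNat : ℝ))) = |(Y ω : ℝ)| := by
        have h2 : (((Y ω).natAbs : ℤ) : ℝ) = |(Y ω : ℝ)| := by
          push_cast [Int.natCast_natAbs, Int.cast_abs]
          ring
        rw [← h2]
        exact_mod_cast hn
      linear_combination |(Y ω : ℝ) - μ| * hn'
    rw [hval] at h
    refine h.congr_fun fun j => ?_
    rw [hFval j ω]
    by_cases h1 : 1 ≤ j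
    · simp only [if_pos h1]
      by_cases h2 : j ≤ Y ω <;> simp [h2, Real.norm_eq_abs]
    · simp only [if_neg h1]
      by_cases h2 : Y ω < j <;> simp [h2, Real.norm_eq_abs, abs_neg, abs_sub_comm]
  -- Summability of the integrals of norms
  have habs_eq : ∀ ω, |(Y ω : ℝ) - μ| * |(Y ω : ℝ)| = ‖((Y ω : ℝ) - μ) * (Y ω : ℝ)‖ := by
    intro ω; rw [Real.norm_eq_abs, abs_mul]
  have hsummable : Summable (fun j : ℤ => ∫ ω, ‖F j ω‖ ∂P) := by
    have hofReal : ∀ j : ℤ, ENNReal.ofReal (∫ ω, ‖F j ω‖ ∂P)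
        = ∫⁻ ω, (‖F j ω‖₊ : ℝ≥0∞) ∂P := fun j =>
      ofReal_integral_norm_eq_lintegral_enorm (hF_int j)
    have hlt : ∑' j : ℤ, ENNReal.ofReal (∫ ω, ‖F j ω‖ ∂P) ≠ ⊤ := by
      rw [tsum_congr hofReal,
        ← lintegral_tsum (f := fun j ω => (‖F j ω‖₊ : ℝ≥0∞)) (fun j => (hF_int j).aestronglyMeasurable.enorm)]
      have hpw : ∀ ω, ∑' j : ℤ, (‖F j ω‖₊ : ℝ≥0∞)
          = (‖((Y ω : ℝ) - μ) * (Y ω : ℝ)‖₊ : ℝ≥0∞) := by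
        intro ω
        have hsum : Summable fun j : ℤ => ‖F j ω‖ := (hptn ω).summable
        calc ∑' j : ℤ, (‖F j ω‖₊ : ℝ≥0∞)
            = ∑' j : ℤ, ENNReal.ofReal ‖F j ω‖ := by
              refine tsum_congr fun j => ?_
              rw [ofReal_norm, enorm_eq_nnnorm]
          _ = ENNReal.ofReal (∑' j : ℤ, ‖F j ω‖) :=
              (ENNReal.ofReal_tsum_of_nonneg (fun j => norm_nonneg _) hsum).symm
          _ = ENNReal.ofReal (|(Y ω : ℝ) - μ| * |(Y ω : ℝ)|) := by rw [(hptn ω).tsum_eq]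
          _ = (‖((Y ω : ℝ) - μ) * (Y ω : ℝ)‖₊ : ℝ≥0∞) := by
              rw [habs_eq ω, ofReal_norm, enorm_eq_nnnorm]
      rw [lintegral_congr hpw]
      exact hprod_int.hasFiniteIntegral.ne
    have := ENNReal.summable_toReal hlt
    refine this.congr fun j => ?_
    exact ENNReal.toReal_ofReal (integral_nonneg fun ω => norm_nonneg _)
  -- Main sum identity
  have hmain := hasSum_integral_of_summable_integral_norm hF_int hsummable
  have htsum_pt : ∀ ω, ∑' j : ℤ, F j ω = ((Y ω : ℝ) - μ) * (Y ω : ℝ) :=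
    fun ω => (hpt ω).tsum_eq
  rw [integral_congr_ae (Filter.Eventually.of_forall htsum_pt), hprod] at hmain
  have hmain' : HasSum (fun j : ℤ => ∫ ω in {ω | j ≤ Y ω}, ((Y ω : ℝ) - μ) ∂P) σ2 :=
    hmain.congr_fun fun j => (hF_integral j).symm
  have := hmain'.div_const σ2
  rwa [div_self hσ.ne'] at this
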